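/- Every mixed extension of a finite game has an optimin point. Precisely: let I be a finite nonempty set of players, for each i ∈ I let X i be a finite nonempty action set and w i : (Π j, X j) → ℝ a payoff function. Let the mixed strategy set of player i be the standard simplex Δ(X i) of probability weights on X i, and let the expected utility of a mixed profile p be U i p = Σ over action profiles a of (Π j, p j (a j)) · w i a. Then there exists a mixed profile p̄ such that there is no mixed profile p with v i p ≥ v i p̄ for all i ∈ I and v j p > v j p̄ for some j ∈ I, where v is the value function of the game with strategy sets Δ(X i) and utilities U i. -/

import Mathlib

/-- The deviation set `B₋ᵢ p`. -/
def Dev {I : Type*} [DecidableEq I] {S : I → Type*}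
    (u : ∀ i : I, (∀ j, S j) → ℝ) (i : I) (p : ∀ j, S j) : Set (∀ j, S j) :=
  {q | q i = p i ∧ ∀ j, j ≠ i → (q j = p j ∨ u j (Function.update p j (q j)) > u j p)}

/-- The value of a profile `p` to player `i`. -/
noncomputable def val {I : Type*} [DecidableEq I] {S : I → Type*}
    (u : ∀ i : I, (∀ j, S j) → ℝ) (i : I) (p : ∀ j, S j) : ℝ :=
  sInf (u i '' Dev u i p)

/-- Expected utility of a mixed strategy profile in the mixed extension of a finite game. -/
noncomputable def EU {I : Type*} [Fintype I] [DecidableEq I] {X : I → Type*}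
    [∀ i, Fintype (X i)] (w : ∀ i : I, (∀ j, X j) → ℝ) (i : I)
    (p : ∀ j, (stdSimplex ℝ (X j) : Set (X j → ℝ))) : ℝ :=
  ∑ a : ∀ j, X j, (∏ j, (p j : X j → ℝ) (a j)) * w i a

section Aux

variable {I : Type*} [Fintype I] [DecidableEq I]
  {X : I → Type*} [∀ i, Fintype (X i)]

instance instNonemptyStdSimplex (j : I) [Nonempty (X j)] :
    Nonempty (stdSimplex ℝ (X j) : Set (X j → ℝ)) := by
  classical
  exact ⟨⟨_, ite_eq_mem_stdSimplex ℝ (Classical.arbitrary (X j))⟩⟩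

instance instCompactStdSimplex (j : I) :
    CompactSpace (stdSimplex ℝ (X j) : Set (X j → ℝ)) :=
  isCompact_iff_compactSpace.mp (isCompact_stdSimplex ℝ (X j))

theorem EU_continuous (w : ∀ i : I, (∀ j, X j) → ℝ) (i : I) :
    Continuous (EU w i) := by
  refine continuous_finset_sum _ fun a _ => Continuous.mul ?_ continuous_const
  exact continuous_finset_prod _ fun j _ =>
    (continuous_apply (a j)).comp (continuous_subtype_val.comp (continuous_apply j))

theorem self_mem_Dev {S : I → Type*} (u : ∀ i : I, (∀ j, S j) → ℝ) (i : I)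
    (p : ∀ j, S j) : p ∈ Dev u i p :=
  ⟨rfl, fun _ _ => Or.inl rfl⟩

theorem bddBelow_EU_image (w : ∀ i : I, (∀ j, X j) → ℝ) (i : I)
    (p : ∀ j, (stdSimplex ℝ (X j) : Set (X j → ℝ))) :
    BddBelow (EU w i '' Dev (EU w) i p) :=
  BddBelow.mono (Set.image_subset_range _ _)
    ((isCompact_range (EU_continuous w i)).bddBelow)

/-- The value function is upper semicontinuous in the mixed extension. -/
theorem val_usc (w : ∀ i : I, (∀ j, X j) → ℝ) (i : I) :
    UpperSemicontinuous (val (EU w) i) := by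
  intro p y hy
  -- pick an element of the deviation set with utility below `y`
  obtain ⟨z, ⟨q, hq, rfl⟩, hqy⟩ :
      ∃ z ∈ EU w i '' Dev (EU w) i p, z < y :=
    exists_lt_of_csInf_lt (⟨_, Set.mem_image_of_mem _ (self_mem_Dev _ i p)⟩) hy
  classical
  -- transported deviation profile
  set g : (∀ j, (stdSimplex ℝ (X j) : Set (X j → ℝ))) →
      (∀ j, (stdSimplex ℝ (X j) : Set (X j → ℝ))) :=
    fun p' j => if j ≠ i ∧ q j ≠ p j then q j else p' j with hg_def
  have hg_cont : Continuous g := by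
    refine continuous_pi fun j => ?_
    by_cases h : j ≠ i ∧ q j ≠ p j
    · simpa [hg_def, h] using continuous_const
    · simpa [hg_def, h] using continuous_apply j
  have hgp : g p = q := by
    funext j
    by_cases h : j ≠ i ∧ q j ≠ p j
    · simp [hg_def, h]
    · push_neg at h
      by_cases hji : j = i
      · subst hji; simp [hg_def, hq.1]
      · simp [hg_def, hji, (h hji).symm]
  -- eventually, the strict deviations remain strict
  have h1 : ∀ᶠ p' in nhds p, ∀ j, (j ≠ i ∧ q j ≠ p j) →
      EU w j (Function.update p' j (q j)) > EU w j p' := by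
    rw [Filter.eventually_all]
    intro j
    by_cases h : j ≠ i ∧ q j ≠ p j
    · have hstrict : EU w j (Function.update p j (q j)) > EU w j p := by
        rcases hq.2 j h.1 with h' | h'
        · exact absurd h' h.2
        · exact h'
      have hcont2 : Continuous fun p' => EU w j (Function.update p' j (q j)) :=
        (EU_continuous w j).comp (continuous_id.update j continuous_const)
      filter_upwards [(EU_continuous w j).continuousAt.eventually_lt
        hcont2.continuousAt hstrict] with p' hp' _
      exact hp'
    · filter_upwards with p' hp'
      exact absurd hp' h
  -- eventually, the transported profile has utility below `y`
  have h2 : ∀ᶠ p' in nhds p, EU w i (g p') < y := by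
    have : ContinuousAt (fun p' => EU w i (g p')) p :=
      ((EU_continuous w i).comp hg_cont).continuousAt
    have := this.eventually_lt continuousAt_const (by simpa [hgp] using hqy)
    simpa using this
  filter_upwards [h1, h2] with p' hp1 hp2
  have hmem : g p' ∈ Dev (EU w) i p' := by
    constructor
    · simp [hg_def]
    · intro j hj
      by_cases h : j ≠ i ∧ q j ≠ p j
      · refine Or.inr ?_
        have : g p' j = q j := by simp [hg_def, h]
        rw [this]
        exact hp1 j h
      · exact Or.inl (by simp [hg_def, h])
  calc val (EU w) i p' ≤ EU w i (g p') :=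
        csInf_le (bddBelow_EU_image w i p') (Set.mem_image_of_mem _ hmem)
    _ < y := hp2

end Aux

/-- An upper semicontinuous real function on a nonempty compact space attains its maximum. -/
theorem exists_max_of_usc {α : Type*} [TopologicalSpace α] [CompactSpace α] [Nonempty α]
    {f : α → ℝ} (hf : UpperSemicontinuous f) : ∃ x, ∀ y, f y ≤ f x := by
  by_contra h
  push_neg at h
  obtain ⟨s, hs⟩ := IsCompact.elim_finite_subcover isCompact_univ
    (fun x => f ⁻¹' Set.Iio (f x))
    (fun x => (upperSemicontinuous_iff_isOpen_preimage.mp hf) (f x))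
    (fun y _ => by
      obtain ⟨x, hx⟩ := h y
      exact Set.mem_iUnion.mpr ⟨x, hx⟩)
  have hsne : s.Nonempty := by
    obtain ⟨x₀⟩ := ‹Nonempty α›
    obtain ⟨x, hx, -⟩ := Set.mem_iUnion₂.mp (hs (Set.mem_univ x₀))
    exact ⟨x, hx⟩
  obtain ⟨b, hb, hbmax⟩ := s.exists_max_image f hsne
  obtain ⟨x, hx, hlt⟩ := Set.mem_iUnion₂.mp (hs (Set.mem_univ b))
  exact absurd (hbmax x hx) (not_le.mpr hlt)

/-- Every mixed extension of a finite game has an optimin point. -/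
theorem exists_optimin_mixed {I : Type*} [Fintype I] [Nonempty I] [DecidableEq I]
    {X : I → Type*} [∀ i, Fintype (X i)] [∀ i, Nonempty (X i)]
    (w : ∀ i : I, (∀ j, X j) → ℝ) :
    ∃ pbar : ∀ j, (stdSimplex ℝ (X j) : Set (X j → ℝ)),
      ¬ ∃ p : ∀ j, (stdSimplex ℝ (X j) : Set (X j → ℝ)),
        (∀ i, val (EU w) i pbar ≤ val (EU w) i p) ∧
        ∃ j, val (EU w) j pbar < val (EU w) j p := by
  have husc : UpperSemicontinuous fun p : ∀ j, (stdSimplex ℝ (X j) : Set (X j → ℝ)) =>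
      ∑ i, val (EU w) i p :=
    upperSemicontinuous_sum fun i _ => val_usc w i
  obtain ⟨pbar, hmax⟩ := exists_max_of_usc husc
  refine ⟨pbar, ?_⟩
  rintro ⟨p, hall, j, hj⟩
  have hlt : ∑ i, val (EU w) i pbar < ∑ i, val (EU w) i p :=
    Finset.sum_lt_sum (fun i _ => hall i) ⟨j, Finset.mem_univ j, hj⟩
  exact absurd (hmax p) (not_le.mpr hlt)
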